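/- arXiv:2505.02798 — 6 statements merged into one kernel-verified Lean document; each statement's English description precedes it below -/
import Mathlib

section
/- Define ℓ(y; x) = inf { ℓ ∈ ℕ : f̲(x; ℓ) ≤ y ≤ f̄(x; ℓ) }, where f̄(x; ℓ) = sup { f(x') : d(x,x') ≤ ℓ } and f̲(x; ℓ) = inf { f(x') : d(x,x') ≤ ℓ }. Then for neighboring datasets x, x' (i.e., d(x,x') ≤ 1) and any y with inf_x f(x) ≤ y ≤ sup_x f(x), we have |ℓ(y; x) − ℓ(y; x')| ≤ 1. -/
theorem stmt5 {X : Type*} (d : X → X → ℕ)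
    (hd0 : ∀ a, d a a = 0) (hsymm : ∀ a b, d a b = d b a)
    (htri : ∀ a b c, d a c ≤ d a b + d b c)
    (f : X → ℝ) (hB : ∃ m M : ℝ, ∀ a, f a ∈ Set.Icc m M)
    (fbar flow : X → ℕ → ℝ)
    (hfbar : ∀ x ℓ, fbar x ℓ = sSup (f '' {x' | d x x' ≤ ℓ}))
    (hflow : ∀ x ℓ, flow x ℓ = sInf (f '' {x' | d x x' ≤ ℓ}))
    (lev : ℝ → X → ℕ)
    (hlev : ∀ y x, lev y x = sInf {ℓ : ℕ | flow x ℓ ≤ y ∧ y ≤ fbar x ℓ})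
    (x x' : X) (hnb : d x x' ≤ 1) (y : ℝ)
    (hrange : ⨅ a, f a ≤ y ∧ y ≤ ⨆ a, f a)
    (hne : {ℓ : ℕ | flow x ℓ ≤ y ∧ y ≤ fbar x ℓ}.Nonempty)
    (hne' : {ℓ : ℕ | flow x' ℓ ≤ y ∧ y ≤ fbar x' ℓ}.Nonempty) :
    |(lev y x : ℤ) - (lev y x' : ℤ)| ≤ 1 := by
  obtain ⟨m, M, hmM⟩ := hB
  -- key: if ℓ feasible for a, then ℓ+1 feasible for b when d a b ≤ 1
  have key : ∀ a b : X, d a b ≤ 1 → ∀ ℓ : ℕ,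
      (flow a ℓ ≤ y ∧ y ≤ fbar a ℓ) → (flow b (ℓ+1) ≤ y ∧ y ≤ fbar b (ℓ+1)) := by
    intro a b hab ℓ hℓ
    have hsub : f '' {x'' | d a x'' ≤ ℓ} ⊆ f '' {x'' | d b x'' ≤ ℓ + 1} := by
      rintro _ ⟨z, hz, rfl⟩
      refine ⟨z, ?_, rfl⟩
      simp only [Set.mem_setOf_eq] at hz ⊢
      have h1 := htri b a z
      have h2 := hsymm a b
      omega
    have hnea : (f '' {x'' | d a x'' ≤ ℓ}).Nonempty :=
      ⟨f a, a, by simp [hd0], rfl⟩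
    have hbddS : BddAbove (f '' {x'' | d b x'' ≤ ℓ + 1}) :=
      ⟨M, by rintro _ ⟨z, _, rfl⟩; exact (hmM z).2⟩
    have hbddI : BddBelow (f '' {x'' | d b x'' ≤ ℓ + 1}) :=
      ⟨m, by rintro _ ⟨z, _, rfl⟩; exact (hmM z).1⟩
    constructor
    · rw [hflow]
      calc sInf (f '' {x'' | d b x'' ≤ ℓ + 1}) ≤ sInf (f '' {x'' | d a x'' ≤ ℓ}) :=
            csInf_le_csInf hbddI hnea hsub
        _ = flow a ℓ := (hflow a ℓ).symm
        _ ≤ y := hℓ.1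
    · rw [hfbar]
      calc y ≤ fbar a ℓ := hℓ.2
        _ = sSup (f '' {x'' | d a x'' ≤ ℓ}) := hfbar a ℓ
        _ ≤ sSup (f '' {x'' | d b x'' ≤ ℓ + 1}) := csSup_le_csSup hbddS hnea hsub
  have h1 : lev y x' ≤ lev y x + 1 := by
    rw [hlev y x']
    have hmem : lev y x ∈ {ℓ : ℕ | flow x ℓ ≤ y ∧ y ≤ fbar x ℓ} := by
      rw [hlev]; exact Nat.sInf_mem hne
    exact Nat.sInf_le (key x x' hnb _ hmem)
  have h2 : lev y x ≤ lev y x' + 1 := by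
    rw [hlev y x]
    have hmem : lev y x' ∈ {ℓ : ℕ | flow x' ℓ ≤ y ∧ y ≤ fbar x' ℓ} := by
      rw [hlev]; exact Nat.sInf_mem hne'
    exact Nat.sInf_le (key x' x (by rw [hsymm]; exact hnb) _ hmem)
  rw [abs_le]
  omega
end

section
/- Let f : X → ℝ^d and suppose functions R_ℓ : X → ℝ (ℓ ≥ 1) satisfy: for all neighboring x, x', R_ℓ(x) ≤ R_{ℓ+1}(x') and R_1(x) ≥ ‖f(x) − f(x')‖_p. Define 𝓡_ℓ(x) = Σ_{k=1}^{ℓ} R_k(x) and ℓ̃(y; x) = inf{ ℓ : 𝓡_ℓ(x) ≥ ‖y − f(x)‖_p }. Then for any neighboring x, x' and any y, |ℓ̃(y; x) − ℓ̃(y; x')| ≤ 1. -/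
theorem stmt12 {X V : Type*} [NormedAddCommGroup V] (d : X → X → ℕ)
    (hsymm : ∀ a b, d a b = d b a)
    (f : X → V) (R : ℕ → X → ℝ)
    (hR1 : ∀ a b : X, d a b ≤ 1 → ∀ ℓ : ℕ, 1 ≤ ℓ → R ℓ a ≤ R (ℓ + 1) b)
    (hR2 : ∀ a b : X, d a b ≤ 1 → ‖f a - f b‖ ≤ R 1 a)
    (RR : ℕ → X → ℝ) (hRR : ∀ ℓ a, RR ℓ a = ∑ k ∈ Finset.Icc 1 ℓ, R k a)
    (ltil : V → X → ℕ)
    (hltil : ∀ y a, ltil y a = sInf {ℓ : ℕ | ‖y - f a‖ ≤ RR ℓ a})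
    (x x' : X) (hnb : d x x' ≤ 1) (y : V)
    (hne : {ℓ : ℕ | ‖y - f x‖ ≤ RR ℓ x}.Nonempty)
    (hne' : {ℓ : ℕ | ‖y - f x'‖ ≤ RR ℓ x'}.Nonempty) :
    |(ltil y x : ℤ) - (ltil y x' : ℤ)| ≤ 1 := by
  have hsum : ∀ a b : X, d a b ≤ 1 → ∀ ℓ : ℕ, RR ℓ a + R 1 b ≤ RR (ℓ + 1) b := by
    intro a b hab ℓ
    induction ℓ with
    | zero =>
      simp [hRR]
    | succ n ih =>
      have h1 : RR (n + 1) a = RR n a + R (n + 1) a := by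
        simp [hRR, Finset.sum_Icc_succ_top (by omega : 1 ≤ n + 1)]
      have h2 : RR (n + 2) b = RR (n + 1) b + R (n + 2) b := by
        simp [hRR, Finset.sum_Icc_succ_top (by omega : 1 ≤ n + 2)]
      have h3 : R (n + 1) a ≤ R (n + 2) b := hR1 a b hab (n + 1) (by omega)
      rw [h1, h2]; linarith
  have key : ∀ a b : X, d a b ≤ 1 → ∀ ℓ : ℕ, ‖y - f a‖ ≤ RR ℓ a →
      ‖y - f b‖ ≤ RR (ℓ + 1) b := by
    intro a b hab ℓ h
    have h1 : ‖y - f b‖ ≤ ‖y - f a‖ + ‖f b - f a‖ := by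
      calc ‖y - f b‖ = ‖(y - f a) + (f a - f b)‖ := by rw [sub_add_sub_cancel]
        _ ≤ ‖y - f a‖ + ‖f a - f b‖ := norm_add_le _ _
        _ = ‖y - f a‖ + ‖f b - f a‖ := by rw [norm_sub_rev (f a) (f b)]
    have h2 : ‖f b - f a‖ ≤ R 1 b := hR2 b a (by rw [hsymm]; exact hab)
    have := hsum a b hab ℓ
    linarith
  have hnb' : d x' x ≤ 1 := by rw [hsymm]; exact hnb
  have hx : ltil y x ∈ {ℓ : ℕ | ‖y - f x‖ ≤ RR ℓ x} := by
    rw [hltil]; exact Nat.sInf_mem hne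
  have hx' : ltil y x' ∈ {ℓ : ℕ | ‖y - f x'‖ ≤ RR ℓ x'} := by
    rw [hltil]; exact Nat.sInf_mem hne'
  have hub1 : ltil y x' ≤ ltil y x + 1 := by
    rw [hltil]
    exact Nat.sInf_le (key x x' hnb _ hx)
  have hub2 : ltil y x ≤ ltil y x' + 1 := by
    rw [hltil]
    exact Nat.sInf_le (key x' x hnb' _ hx')
  rw [abs_sub_le_iff]
  omega
end

section
/- Let Δ(x) = sup_{x': d(x,x') ≤ 1} ‖f(x) − f(x')‖_p and Δ' = sup_{x,x': d(x,x') ≤ 1} |Δ(x) − Δ(x')|. Then R_ℓ(x) = Δ(x) + (ℓ − 1)·Δ' satisfies the radius bounding conditions: R_1(x) ≥ ‖f(x) − f(x')‖_p and R_ℓ(x) ≤ R_{ℓ+1}(x') for all neighboring x, x' and ℓ ≥ 1. -/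
theorem stmt15 {X V : Type*} [NormedAddCommGroup V] (d : X → X → ℕ)
    (f : X → V) (Δloc : X → ℝ) (Δ' : ℝ)
    (hΔloc : ∀ a, Δloc a = sSup {r : ℝ | ∃ b, d a b ≤ 1 ∧ r = ‖f a - f b‖})
    (hbddloc : ∀ a, BddAbove {r : ℝ | ∃ b, d a b ≤ 1 ∧ r = ‖f a - f b‖})
    (hΔ' : Δ' = sSup {r : ℝ | ∃ a b, d a b ≤ 1 ∧ r = |Δloc a - Δloc b|})
    (hbdd' : BddAbove {r : ℝ | ∃ a b, d a b ≤ 1 ∧ r = |Δloc a - Δloc b|})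
    (R : ℕ → X → ℝ)
    (hR : ∀ (ℓ : ℕ) (a : X), R ℓ a = Δloc a + ((ℓ : ℝ) - 1) * Δ')
    (x x' : X) (hnb : d x x' ≤ 1) (ℓ : ℕ) (hℓ : 1 ≤ ℓ) :
    ‖f x - f x'‖ ≤ R 1 x ∧ R ℓ x ≤ R (ℓ + 1) x' := by
  have h1 : ‖f x - f x'‖ ≤ Δloc x := by
    rw [hΔloc x]
    exact le_csSup (hbddloc x) ⟨x', hnb, rfl⟩
  have h2 : |Δloc x - Δloc x'| ≤ Δ' := by
    rw [hΔ']
    exact le_csSup hbdd' ⟨x, x', hnb, rfl⟩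
  have h3 : (0:ℝ) ≤ Δ' := le_trans (abs_nonneg _) h2
  have h4 : Δloc x - Δloc x' ≤ Δ' := le_trans (le_abs_self _) h2
  constructor
  · rw [hR]; push_cast; linarith
  · rw [hR, hR]; push_cast; nlinarith [(Nat.one_le_cast (α := ℝ)).mpr hℓ]
end

section
/- Let Z be a random variable obtained by first sampling an interval index (𝟙, ℓ) with 𝟙 ∈ {±1}, ℓ ≥ 1, with probability proportional to exp(−ℓε/2)·Δ_{𝟙ℓ} where Δ_{𝟙ℓ} > 0 are interval lengths, and then sampling z from the truncated exponential distribution on [0, Δ_{𝟙ℓ}] with rate ε/(2Δ_{𝟙ℓ}), returning the point at signed distance within the chosen interval. Then for any two outputs y, y' in intervals (1, ℓ) and (−1, ℓ') respectively, the ratio of densities equals exp((q(y) − q(y'))·ε/2), where −q(y) = ℓ + (offset of y within its interval)/Δ_{1ℓ} and similarly for y'. Consequently Z is distributed as the exponential mechanism with quality score q. -/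
/-- Two-step sampling density for the piecewise Laplace mechanism: first draw an
interval `(s, ℓ)` (sign `s`, index `ℓ ≥ 1`) with probability proportional to
`exp(-ℓ ε/2) · Δ_{sℓ}`, then draw an offset from the truncated exponential on
`[0, Δ_{sℓ}]` with rate `ε/(2Δ_{sℓ})`.  The ratio of densities at two outputs
equals `exp((q(y) - q(y')) ε / 2)` for the piecewise Laplace quality score. -/
theorem stmt16 (ε : ℝ) (hε : 0 < ε) (Δp Δm : ℕ → ℝ)
    (hΔp : ∀ ℓ : ℕ, 1 ≤ ℓ → 0 < Δp ℓ) (hΔm : ∀ ℓ : ℕ, 1 ≤ ℓ → 0 < Δm ℓ)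
    (Zsum : ℝ)
    (hZ : Zsum = ∑' ℓ : ℕ,
      Real.exp (-((ℓ : ℝ) + 1) * ε / 2) * (Δp (ℓ + 1) + Δm (ℓ + 1)))
    (hZpos : 0 < Zsum)
    (π : Bool → ℕ → ℝ → ℝ)
    (hπ : ∀ (s : Bool) (ℓ : ℕ) (z : ℝ),
      π s ℓ z =
        (Real.exp (-(ℓ : ℝ) * ε / 2) * (if s then Δp ℓ else Δm ℓ) / Zsum) *
          ((ε / 2) / (if s then Δp ℓ else Δm ℓ) *
              Real.exp (-z * (ε / 2) / (if s then Δp ℓ else Δm ℓ)) /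
            (1 - Real.exp (-ε / 2))))
    (ℓ ℓ' : ℕ) (hℓ : 1 ≤ ℓ) (hℓ' : 1 ≤ ℓ')
    (z z' : ℝ) (hz : z ∈ Set.Icc 0 (Δp ℓ)) (hz' : z' ∈ Set.Icc 0 (Δm ℓ'))
    (q q' : ℝ)
    (hq : -q = (ℓ : ℝ) + z / Δp ℓ) (hq' : -q' = (ℓ' : ℝ) + z' / Δm ℓ') :
    π true ℓ z / π false ℓ' z' = Real.exp ((q - q') * ε / 2) := by
  have hA := hΔp ℓ hℓ
  have hB := hΔm ℓ' hℓ'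
  have hD : (0:ℝ) < 1 - Real.exp (-ε / 2) := by
    have : Real.exp (-ε / 2) < 1 := by
      rw [Real.exp_lt_one_iff]; linarith
    linarith
  have hqv : q = -((ℓ : ℝ) + z / Δp ℓ) := by linarith
  have hqv' : q' = -((ℓ' : ℝ) + z' / Δm ℓ') := by linarith
  have key : ∀ (A : ℝ) (hA : 0 < A) (n : ℝ) (w : ℝ),
      (Real.exp (-n * ε / 2) * A / Zsum) *
        ((ε / 2) / A * Real.exp (-w * (ε / 2) / A) / (1 - Real.exp (-ε / 2)))
      = Real.exp (-(n + w / A) * ε / 2) * ((ε / 2) / (Zsum * (1 - Real.exp (-ε / 2)))) := by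
    intro A hA n w
    rw [show (-(n + w / A) * ε / 2 : ℝ) = (-n * ε / 2) + (-w * (ε / 2) / A) by
      field_simp; ring, Real.exp_add]
    field_simp
  rw [hπ, hπ, if_pos rfl, if_neg (by simp)]
  rw [key (Δp ℓ) hA ℓ z, key (Δm ℓ') hB ℓ' z']
  rw [← hqv, ← hqv']
  have hc : (0:ℝ) < (ε / 2) / (Zsum * (1 - Real.exp (-ε / 2))) := by positivity
  rw [mul_div_mul_right _ _ hc.ne', ← Real.exp_sub]
  ring_nf
end

section
/- Let M_plm be the distribution on ℝ with density proportional to exp(q_plm(y;x)·ε/2), and M_inv the distribution with density proportional to exp(−ℓ(y;x)·ε/2), where q_plm and ℓ are the piecewise Laplace quality score and the interval index, on a bounded output range. Assume both can be sampled by first choosing interval (𝟙, ℓ) with probability proportional to exp(−ℓε/2)·Δ_{𝟙ℓ} and then sampling within the interval — from the truncated exponential with rate ε/(2Δ_{𝟙ℓ}) for M_plm, and uniformly for M_inv. Then for every α ≥ 0, P[|M_plm − f(x)| ≤ α] ≥ P[|M_inv − f(x)| ≤ α]. -/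
/-- Truncated exponential CDF dominates the uniform CDF. -/
lemma cdf_key {c x : ℝ} (hc : 0 < c) (hx0 : 0 ≤ x) (hx1 : x ≤ 1) :
    x ≤ (1 - Real.exp (-x * c)) / (1 - Real.exp (-c)) := by
  have hlt : Real.exp (-c) < 1 := Real.exp_lt_one_iff.2 (by linarith)
  have hpos : 0 < 1 - Real.exp (-c) := by linarith
  rw [le_div_iff₀ hpos]
  have hconv := convexOn_exp.2 (Set.mem_univ 0) (Set.mem_univ (-c))
    (by linarith : (0:ℝ) ≤ 1 - x) hx0 (by ring)
  simp only [smul_eq_mul, mul_zero, zero_add, Real.exp_zero] at hconv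
  rw [show x * -c = -x * c by ring] at hconv
  linarith

/-- Both mechanisms choose interval `i` with the same probability `w i`; within
the interval (of length `Δ i`, of which `t i α` lies within distance `α` of
`f(x)`), the piecewise Laplace mechanism samples from the truncated exponential
with rate `ε/(2 Δ i)` while the inverse sensitivity mechanism samples
uniformly.  Then the piecewise Laplace mechanism is at least as concentrated
around `f(x)`. -/
theorem stmt18 (ε : ℝ) (hε : 0 < ε) {ι : Type*} [Countable ι]
    (w Δ : ι → ℝ) (hw : ∀ i, 0 ≤ w i) (hΔ : ∀ i, 0 < Δ i)
    (hwsum : Summable w)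
    (t : ι → ℝ → ℝ) (ht : ∀ (i : ι) (α : ℝ), 0 ≤ α → t i α ∈ Set.Icc 0 (Δ i))
    (Pplm Pinv : ℝ → ℝ)
    (hPplm : ∀ α : ℝ, 0 ≤ α → Pplm α =
      ∑' i, w i * ((1 - Real.exp (-(t i α) * (ε / 2) / Δ i)) /
        (1 - Real.exp (-ε / 2))))
    (hPinv : ∀ α : ℝ, 0 ≤ α → Pinv α = ∑' i, w i * (t i α / Δ i))
    (α : ℝ) (hα : 0 ≤ α) :
    Pinv α ≤ Pplm α := by
  rw [hPplm α hα, hPinv α hα]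
  have hc : 0 < ε / 2 := by linarith
  have hlt : Real.exp (-(ε/2)) < 1 := Real.exp_lt_one_iff.2 (by linarith)
  have hkey : ∀ i, t i α / Δ i ≤
      (1 - Real.exp (-(t i α) * (ε / 2) / Δ i)) / (1 - Real.exp (-ε / 2)) := by
    intro i
    have h0 := (ht i α hα).1
    have h1 := (ht i α hα).2
    have hΔi := hΔ i
    have hx0 : 0 ≤ t i α / Δ i := div_nonneg h0 hΔi.le
    have hx1 : t i α / Δ i ≤ 1 := (div_le_one hΔi).2 h1
    have := cdf_key hc hx0 hx1
    have harg : -(t i α / Δ i) * (ε / 2) = -(t i α) * (ε / 2) / Δ i := by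
      ring
    rw [harg] at this
    rw [show -ε/2 = -(ε/2) by ring]
    exact this
  have hterm : ∀ i, w i * (t i α / Δ i) ≤
      w i * ((1 - Real.exp (-(t i α) * (ε / 2) / Δ i)) / (1 - Real.exp (-ε / 2))) :=
    fun i => mul_le_mul_of_nonneg_left (hkey i) (hw i)
  have hbound : ∀ i, w i * ((1 - Real.exp (-(t i α) * (ε / 2) / Δ i)) /
      (1 - Real.exp (-ε / 2))) ≤ w i * (1 / (1 - Real.exp (-ε / 2))) := by
    intro i
    apply mul_le_mul_of_nonneg_left _ (hw i)
    apply div_le_div_of_nonneg_right _ (by rw [show -ε/2 = -(ε/2) by ring]; linarith)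
    · have := Real.exp_nonneg (-(t i α) * (ε / 2) / Δ i); linarith
  have hSright : Summable (fun i => w i * ((1 - Real.exp (-(t i α) * (ε / 2) / Δ i)) /
      (1 - Real.exp (-ε / 2)))) := by
    apply Summable.of_nonneg_of_le (fun i => ?_) hbound
      (hwsum.mul_right (1 / (1 - Real.exp (-ε / 2))))
    exact le_trans (mul_nonneg (hw i) (div_nonneg (ht i α hα).1 (hΔ i).le)) (hterm i)
  have hSleft : Summable (fun i => w i * (t i α / Δ i)) := by
    apply Summable.of_nonneg_of_le
      (fun i => mul_nonneg (hw i) (div_nonneg (ht i α hα).1 (hΔ i).le)) hterm hSright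
  exact Summable.tsum_le_tsum hterm hSleft hSright
end

section
/- Let q : Y × X → ℝ be a quality score with sensitivity at most Δ_q (i.e., |q(y,x) − q(y,x')| ≤ Δ_q for all neighboring x, x' and all y), and let M_q(x) have density proportional to exp(ε·q(y,x)/2) over a measurable output space Y with finite normalizer. Then for all neighboring x, x' and measurable S ⊆ Y: P[M_q(x) ∈ S] ≤ e^{ε·Δ_q} · P[M_q(x') ∈ S]; i.e., the exponential mechanism is (ε·Δ_q)-differentially private. -/
open MeasureTheory

theorem stmt19 {X Y : Type*} [MeasurableSpace Y] (μ : Measure Y)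
    (d : X → X → ℕ) (q : Y → X → ℝ) (ε Δq : ℝ) (hε : 0 < ε) (hΔq : 0 ≤ Δq)
    (hsens : ∀ (y : Y) (a b : X), d a b ≤ 1 → |q y a - q y b| ≤ Δq)
    (hInt : ∀ a : X, Integrable (fun y => Real.exp (ε * q y a / 2)) μ)
    (hpos : ∀ a : X, 0 < ∫ y, Real.exp (ε * q y a / 2) ∂μ)
    (x x' : X) (hnb : d x x' ≤ 1) (S : Set Y) (hS : MeasurableSet S) :
    (∫ y in S, Real.exp (ε * q y x / 2) ∂μ) /
        (∫ y, Real.exp (ε * q y x / 2) ∂μ) ≤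
      Real.exp (ε * Δq) *
        ((∫ y in S, Real.exp (ε * q y x' / 2) ∂μ) /
          (∫ y, Real.exp (ε * q y x' / 2) ∂μ)) := by
  set A := ∫ y in S, Real.exp (ε * q y x / 2) ∂μ with hA
  set B := ∫ y, Real.exp (ε * q y x / 2) ∂μ with hB
  set A' := ∫ y in S, Real.exp (ε * q y x' / 2) ∂μ with hA'
  set B' := ∫ y, Real.exp (ε * q y x' / 2) ∂μ with hB'
  have hBpos : 0 < B := hpos x
  have hB'pos : 0 < B' := hpos x'
  have key : ∀ (a b : X), (∀ y, |q y a - q y b| ≤ Δq) → ∀ y,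
      Real.exp (ε * q y a / 2) ≤ Real.exp (ε * Δq / 2) * Real.exp (ε * q y b / 2) := by
    intro a b hab y
    rw [← Real.exp_add]
    apply Real.exp_le_exp.mpr
    have h := (abs_le.mp (hab y)).2
    nlinarith [hε.le]
  have hAle : A ≤ Real.exp (ε * Δq / 2) * A' := by
    rw [hA, hA', ← integral_const_mul]
    refine integral_mono_of_nonneg ?_ ?_ ?_
    · exact Filter.Eventually.of_forall fun y => (Real.exp_pos _).le
    · exact ((hInt x').restrict.const_mul _)
    · exact Filter.Eventually.of_forall fun y => key x x' (fun y => hsens y x x' hnb) y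
  have hB'le : B' ≤ Real.exp (ε * Δq / 2) * B := by
    rw [hB, hB', ← integral_const_mul]
    refine integral_mono_of_nonneg ?_ ?_ ?_
    · exact Filter.Eventually.of_forall fun y => (Real.exp_pos _).le
    · exact ((hInt x).const_mul _)
    · exact Filter.Eventually.of_forall fun y => key x' x (fun y => abs_sub_comm (q y x) (q y x') ▸ hsens y x x' hnb) y
  have hA'nonneg : 0 ≤ A' :=
    integral_nonneg fun y => (Real.exp_pos _).le
  have hE : (0:ℝ) < Real.exp (ε * Δq / 2) := Real.exp_pos _
  have h1 : A / B ≤ Real.exp (ε * Δq / 2) * A' / B := by gcongr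
  have h2 : (1:ℝ) / B ≤ Real.exp (ε * Δq / 2) / B' := by
    rw [div_le_div_iff₀ hBpos hB'pos]
    linarith
  calc A / B ≤ Real.exp (ε * Δq / 2) * A' / B := h1
    _ = (Real.exp (ε * Δq / 2) * A') * (1 / B) := by ring
    _ ≤ (Real.exp (ε * Δq / 2) * A') * (Real.exp (ε * Δq / 2) / B') := by
        apply mul_le_mul_of_nonneg_left h2 (by positivity)
    _ = Real.exp (ε * Δq) * (A' / B') := by
        rw [show ε * Δq = ε * Δq / 2 + ε * Δq / 2 by ring, Real.exp_add]; ring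
end
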